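/- Let d = 3 and 0 < a < b < R, and let ζ be the compressed coordinate transformation. Define β : [0, b] → ℝ by β(0) = 1 and β(r) = ζ(r)²ζ'(r)/r² for r ∈ (0, b], and define the matrix field M on the closed ball {x ∈ ℝ³ : |x| ≤ b} by M(x) = I for |x| ≤ a and M(x)w = (ζ(r)²/(r² ζ'(r))) P_x(w) + ζ'(r)(w − P_x(w)) for a < |x| ≤ b, where r = |x|. Then β is continuous and strictly positive on [0, b], and for every x with |x| ≤ b, M(x) is a symmetric positive definite linear map, and x ↦ M(x) is continuous on the closed ball of radius b. -/

import Mathlib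

open scoped RealInnerProductSpace

noncomputable section

/-- The orthogonal projection of `w` onto the span of `e_r = x/‖x‖`. -/
def radialProj {E : Type*} [NormedAddCommGroup E] [InnerProductSpace ℝ E]
    (x w : E) : E :=
  ⟪w, ‖x‖⁻¹ • x⟫ • (‖x‖⁻¹ • x)


/-- denominator polynomial -/
def dnP (a b R r : ℝ) : ℝ := (b - r) * (R - b) + (b - a) ^ 2
/-- numerator polynomial -/
def nmP (a b R r : ℝ) : ℝ := a ^ 2 * (R - b) + r * (a ^ 2 + (b - 2 * a) * R)

lemma dnP_pos {a b R : ℝ} (hab : a < b) (hbR : b < R) {r : ℝ} (hr : r ≤ b) :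
    0 < dnP a b R r := by
  unfold dnP; nlinarith

lemma nmP_pos {a b R : ℝ} (ha : 0 < a) (hab : a < b) (hbR : b < R) {r : ℝ}
    (h1 : a ≤ r) (h2 : r ≤ b) : 0 < nmP a b R r := by
  unfold nmP
  rcases le_or_gt 0 (a ^ 2 + (b - 2 * a) * R) with hc | hc
  · nlinarith [mul_nonneg (sub_nonneg.2 h1) hc,
      mul_pos (mul_pos ha (sub_pos.2 hab)) (show (0:ℝ) < R - a by linarith)]
  · nlinarith [mul_nonneg (sub_nonneg.2 h2) (neg_nonneg.2 hc.le),
      mul_pos (show (0:ℝ) < R by linarith) (pow_pos (sub_pos.2 hab) 2)]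

lemma dnP_a {a b R : ℝ} : dnP a b R a = (b - a) * (R - a) := by unfold dnP; ring

lemma nmP_a {a b R : ℝ} : nmP a b R a = a * dnP a b R a := by unfold nmP dnP; ring

lemma hasDerivAt_quot (a b R r : ℝ) (hne : dnP a b R r ≠ 0) :
    HasDerivAt (fun s => nmP a b R s / dnP a b R s)
      ((b - a) ^ 2 * (R - a) ^ 2 / (dnP a b R r) ^ 2) r := by
  have hnum : HasDerivAt (fun s : ℝ => nmP a b R s) (a ^ 2 + (b - 2 * a) * R) r := by
    unfold nmP
    simpa using ((hasDerivAt_id r).mul_const (a ^ 2 + (b - 2 * a) * R)).const_add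
      (a ^ 2 * (R - b))
  have hden : HasDerivAt (fun s : ℝ => dnP a b R s) (-(R - b)) r := by
    unfold dnP
    simpa using (((hasDerivAt_id r).const_sub b).mul_const (R - b)).add_const ((b - a) ^ 2)
  have h := hnum.div hden hne
  refine h.congr_deriv ?_
  rw [div_eq_div_iff (by positivity) (by positivity)]
  unfold nmP dnP
  ring


abbrev E3 := EuclideanSpace ℝ (Fin 3)

lemma zeta_facts (a b R : ℝ) (ha : 0 < a) (hab : a < b) (hbR : b < R)
    (η ζ : ℝ → ℝ)
    (hη : ∀ r : ℝ, η r =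
      (a ^ 2 * (R - b) + r * (a ^ 2 + (b - 2 * a) * R)) / ((b - r) * (R - b) + (b - a) ^ 2))
    (hζ : ∀ r : ℝ, ζ r = if r < a then r else η r) :
    (∀ r, r ≤ a → ζ r = r) ∧
    (∀ r, a ≤ r → ζ r = nmP a b R r / dnP a b R r) ∧
    (∀ r, r < a → deriv ζ r = 1) ∧
    (∀ r, a < r → r ≤ b → deriv ζ r = (b - a) ^ 2 * (R - a) ^ 2 / (dnP a b R r) ^ 2) ∧
    deriv ζ a = 1 := by
  have hdnane : dnP a b R a ≠ 0 := (dnP_pos hab hbR hab.le).ne'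
  have hζge : ∀ r, a ≤ r → ζ r = nmP a b R r / dnP a b R r := by
    intro r hr
    rw [hζ, if_neg (not_lt.2 hr), hη]; rfl
  have hζa : ζ a = a := by
    rw [hζge a le_rfl, nmP_a, mul_div_assoc, div_self hdnane, mul_one]
  have hζle : ∀ r, r ≤ a → ζ r = r := by
    intro r hr
    rcases lt_or_eq_of_le hr with h | h
    · rw [hζ, if_pos h]
    · rw [h, hζa]
  have hKone : (b - a) ^ 2 * (R - a) ^ 2 / (dnP a b R a) ^ 2 = 1 := by
    rw [dnP_a, div_eq_one_iff_eq (by rw [← dnP_a]; positivity)]; ring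
  have hdlt : ∀ r, r < a → deriv ζ r = 1 := by
    intro r hr
    have hev : ζ =ᶠ[nhds r] fun y => y :=
      Filter.eventuallyEq_of_mem (Iio_mem_nhds hr) fun y hy => by
        rw [hζ, if_pos (Set.mem_Iio.mp hy)]
    rw [hev.deriv_eq]; exact (hasDerivAt_id r).deriv
  have hdgt : ∀ r, a < r → r ≤ b →
      deriv ζ r = (b - a) ^ 2 * (R - a) ^ 2 / (dnP a b R r) ^ 2 := by
    intro r hr hrb
    have hev : ζ =ᶠ[nhds r] fun s => nmP a b R s / dnP a b R s :=
      Filter.eventuallyEq_of_mem (Ioi_mem_nhds hr) fun y hy => hζge y (le_of_lt hy)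
    rw [hev.deriv_eq]
    exact (hasDerivAt_quot a b R r (dnP_pos hab hbR hrb).ne').deriv
  have hda : HasDerivAt ζ 1 a := by
    have hleft : HasDerivWithinAt ζ 1 (Set.Iic a) a := by
      exact (hasDerivWithinAt_id a _).congr (fun y hy => hζle y hy) hζa
    have hright : HasDerivWithinAt ζ 1 (Set.Ici a) a := by
      have h := (hasDerivAt_quot a b R a hdnane).hasDerivWithinAt (s := Set.Ici a)
      rw [hKone] at h
      exact h.congr (fun y hy => hζge y hy) (by rw [hζge a le_rfl])
    have := hleft.union hright
    rw [Set.Iic_union_Ici] at this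
    exact this.hasDerivAt (by simp)
  exact ⟨hζle, hζge, hdlt, hdgt, hda.deriv⟩

lemma beta_part (a b R : ℝ) (ha : 0 < a) (hab : a < b) (hbR : b < R)
    (ζ : ℝ → ℝ)
    (hζle : ∀ r, r ≤ a → ζ r = r)
    (hζge : ∀ r, a ≤ r → ζ r = nmP a b R r / dnP a b R r)
    (hdlt : ∀ r, r < a → deriv ζ r = 1)
    (hdgt : ∀ r, a < r → r ≤ b → deriv ζ r = (b - a) ^ 2 * (R - a) ^ 2 / (dnP a b R r) ^ 2)
    (hda : deriv ζ a = 1)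
    (β : ℝ → ℝ) (hβ0 : β 0 = 1)
    (hβ : ∀ r : ℝ, 0 < r → r ≤ b → β r = ζ r ^ 2 * deriv ζ r / r ^ 2) :
    ContinuousOn β (Set.Icc 0 b) ∧ (∀ r ∈ Set.Icc (0 : ℝ) b, 0 < β r) := by
  set K : ℝ := (b - a) ^ 2 * (R - a) ^ 2 with hK
  have hKpos : 0 < K := by
    rw [hK]
    exact mul_pos (pow_pos (sub_pos.2 hab) 2) (pow_pos (show (0:ℝ) < R - a by linarith) 2)
  set βf : ℝ → ℝ := fun r =>
    nmP a b R (max r a) ^ 2 * K / ((max r a) ^ 2 * dnP a b R (max r a) ^ 4) with hβf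
  have hone : ∀ r : ℝ, r ≤ a → βf r = 1 := by
    intro r hr
    have hm : max r a = a := max_eq_right hr
    have hdna : dnP a b R a ≠ 0 := (dnP_pos hab hbR hab.le).ne'
    have hKa : K = dnP a b R a ^ 2 := by rw [dnP_a, hK]; ring
    rw [hβf]
    simp only [hm]
    rw [nmP_a, hKa]
    field_simp
  have hEq : Set.EqOn β βf (Set.Icc 0 b) := by
    intro r hr
    obtain ⟨h0, hb'⟩ := hr
    rcases eq_or_lt_of_le h0 with h | h
    · rw [← h, hβ0, hone 0 ha.le]
    rcases le_or_gt r a with hra | hra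
    · rw [hone r hra, hβ r h hb', hζle r hra]
      rcases lt_or_eq_of_le hra with h2 | h2
      · rw [hdlt r h2]
        field_simp
      · rw [h2, hda]
        field_simp
    · have hm : max r a = r := max_eq_left hra.le
      rw [hβ r h hb', hζge r hra.le, hdgt r hra hb', hβf]
      simp only [hm]
      have h1 : (0:ℝ) < dnP a b R r := dnP_pos hab hbR hb'
      rw [div_pow, div_mul_div_comm, div_div,
        div_eq_div_iff (by positivity) (by positivity)]
      ring
  have hcf : ContinuousOn βf (Set.Icc 0 b) := by
    have hc1 : Continuous fun r : ℝ => nmP a b R (max r a) ^ 2 * K := by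
      unfold nmP; fun_prop
    have hc2 : Continuous fun r : ℝ => (max r a) ^ 2 * dnP a b R (max r a) ^ 4 := by
      unfold dnP; fun_prop
    refine ContinuousOn.div hc1.continuousOn hc2.continuousOn ?_
    intro r hr
    have h1 : a ≤ max r a := le_max_right _ _
    have h2 : max r a ≤ b := max_le hr.2 hab.le
    have := dnP_pos hab hbR h2
    positivity
  refine ⟨hcf.congr hEq, ?_⟩
  intro r hr
  rw [hEq hr]
  have h1 : a ≤ max r a := le_max_right _ _
  have h2 : max r a ≤ b := max_le hr.2 hab.le
  have h3 := dnP_pos hab hbR h2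
  have h4 := nmP_pos ha hab hbR h1 h2
  have h5 : (0:ℝ) < max r a := lt_of_lt_of_le ha h1
  exact div_pos (by positivity) (by positivity)

set_option maxHeartbeats 1000000 in
lemma mat_part (a b R : ℝ) (ha : 0 < a) (hab : a < b) (hbR : b < R)
    (ζ : ℝ → ℝ)
    (hζge : ∀ r, a ≤ r → ζ r = nmP a b R r / dnP a b R r)
    (hdgt : ∀ r, a < r → r ≤ b → deriv ζ r = (b - a) ^ 2 * (R - a) ^ 2 / (dnP a b R r) ^ 2)
    (M : E3 → (E3 →L[ℝ] E3))
    (hM1 : ∀ x : E3, ‖x‖ ≤ a → M x = ContinuousLinearMap.id ℝ E3)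
    (hM2 : ∀ x : E3, a < ‖x‖ → ‖x‖ ≤ b → ∀ w,
      M x w = (ζ ‖x‖ ^ 2 / (‖x‖ ^ 2 * deriv ζ ‖x‖)) • radialProj x w +
        deriv ζ ‖x‖ • (w - radialProj x w)) :
    (∀ x : E3, ‖x‖ ≤ b →
      (∀ w z : E3, ⟪M x w, z⟫ = ⟪w, M x z⟫) ∧
      (∀ w : E3, w ≠ 0 → 0 < ⟪M x w, w⟫)) ∧
    ContinuousOn M (Metric.closedBall (0 : E3) b) := by
  have hKpos : (0:ℝ) < (b - a) ^ 2 * (R - a) ^ 2 :=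
    mul_pos (pow_pos (sub_pos.2 hab) 2) (pow_pos (show (0:ℝ) < R - a by linarith) 2)
  constructor
  · -- pointwise symmetry and positive definiteness
    intro x hxb
    rcases le_or_gt ‖x‖ a with hxa | hxa
    · rw [hM1 x hxa]
      refine ⟨fun w z => rfl, fun w hw => ?_⟩
      have hid : (ContinuousLinearMap.id ℝ E3) w = w := rfl
      rw [hid, real_inner_self_eq_norm_sq]
      exact pow_pos (norm_pos_iff.mpr hw) 2
    · have hx0 : (0:ℝ) < ‖x‖ := lt_trans ha hxa
      have hd : (0:ℝ) < dnP a b R ‖x‖ := dnP_pos hab hbR hxb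
      have hγ : deriv ζ ‖x‖ = (b - a) ^ 2 * (R - a) ^ 2 / (dnP a b R ‖x‖) ^ 2 :=
        hdgt _ hxa hxb
      have hγpos : 0 < deriv ζ ‖x‖ := by rw [hγ]; positivity
      have hζpos : 0 < ζ ‖x‖ := by
        rw [hζge _ hxa.le]
        exact div_pos (nmP_pos ha hab hbR hxa.le hxb) hd
      have hαpos : 0 < ζ ‖x‖ ^ 2 / (‖x‖ ^ 2 * deriv ζ ‖x‖) := by positivity
      set α := ζ ‖x‖ ^ 2 / (‖x‖ ^ 2 * deriv ζ ‖x‖) with hα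
      set γ := deriv ζ ‖x‖ with hγ'
      have he : ‖(‖x‖⁻¹ • x : E3)‖ = 1 := by
        rw [norm_smul, norm_inv, norm_norm, inv_mul_cancel₀ hx0.ne']
      constructor
      · intro w z
        rw [hM2 x hxa hxb w, hM2 x hxa hxb z]
        simp only [radialProj, inner_add_left, inner_add_right, inner_sub_left,
          inner_sub_right, real_inner_smul_left, real_inner_smul_right]
        rw [real_inner_comm z x]
        ring
      · intro w hw
        set u : ℝ := ⟪w, (‖x‖⁻¹ • x : E3)⟫ with hu
        have key : ⟪(M x) w, w⟫ = α * u ^ 2 + γ * (‖w‖ ^ 2 - u ^ 2) := by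
          rw [hM2 x hxa hxb w]
          simp only [radialProj, inner_add_left, inner_sub_left, real_inner_smul_left,
            real_inner_smul_right, ← hα, ← hγ']
          rw [hu, real_inner_smul_right, real_inner_self_eq_norm_sq w,
            real_inner_comm x w]
          ring
        have ht2 : u ^ 2 ≤ ‖w‖ ^ 2 := by
          have h1 : |u| ≤ ‖w‖ * ‖(‖x‖⁻¹ • x : E3)‖ := abs_real_inner_le_norm _ _
          rw [he, mul_one] at h1
          nlinarith [sq_abs u, abs_nonneg u]
        have hwpos : (0:ℝ) < ‖w‖ ^ 2 := pow_pos (norm_pos_iff.mpr hw) 2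
        rcases eq_or_ne u 0 with h0 | h0
        · rw [key, h0]
          nlinarith [mul_pos hγpos hwpos]
        · have hupos : 0 < u ^ 2 :=
            lt_of_le_of_ne (sq_nonneg u) (Ne.symm (pow_ne_zero 2 h0))
          rw [key]
          nlinarith [mul_pos hαpos hupos, mul_nonneg hγpos.le (sub_nonneg.2 ht2)]
  · -- continuity
    set K : ℝ := (b - a) ^ 2 * (R - a) ^ 2 with hK
    set gf : ℝ → ℝ := fun s => K / dnP a b R (max s a) ^ 2 with hgf
    set cf : ℝ → ℝ := fun s =>
      (nmP a b R (max s a) ^ 2 * dnP a b R (max s a) ^ 2 - (max s a) ^ 2 * K ^ 2) /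
        ((max s a) ^ 4 * K * dnP a b R (max s a) ^ 2) with hcf
    set N : E3 → (E3 →L[ℝ] E3) := fun x =>
      gf ‖x‖ • ContinuousLinearMap.id ℝ E3 +
        cf ‖x‖ • ((innerSL ℝ x).smulRight x) with hN
    have hEq : Set.EqOn M N (Metric.closedBall (0 : E3) b) := by
      intro x hx
      rw [Metric.mem_closedBall, dist_zero_right] at hx
      rcases le_or_gt ‖x‖ a with hxa | hxa
      · have hm : max ‖x‖ a = a := max_eq_right hxa
        have hdna : dnP a b R a ≠ 0 := (dnP_pos hab hbR hab.le).ne'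
        have hg1 : gf ‖x‖ = 1 := by
          rw [hgf]; simp only [hm]
          rw [hK, dnP_a, div_eq_one_iff_eq (by rw [← dnP_a]; positivity)]; ring
        have hc0 : cf ‖x‖ = 0 := by
          rw [hcf]; simp only [hm]
          rw [div_eq_zero_iff]
          left
          rw [nmP_a, hK, dnP_a]; ring
        rw [hM1 x hxa]
        refine ContinuousLinearMap.ext fun w => ?_
        simp only [hN, ContinuousLinearMap.add_apply, ContinuousLinearMap.smul_apply,
          ContinuousLinearMap.id_apply, ContinuousLinearMap.coe_id', id_eq, hg1, hc0]
        simp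
      · have hm : max ‖x‖ a = ‖x‖ := max_eq_left hxa.le
        have hx0 : (0:ℝ) < ‖x‖ := lt_trans ha hxa
        have hd : (0:ℝ) < dnP a b R ‖x‖ := dnP_pos hab hbR hx
        have hγ : deriv ζ ‖x‖ = K / (dnP a b R ‖x‖) ^ 2 := hdgt _ hxa hx
        refine ContinuousLinearMap.ext fun w => ?_
        rw [hM2 x hxa hx w]
        simp only [hN, ContinuousLinearMap.add_apply, ContinuousLinearMap.smul_apply,
          ContinuousLinearMap.id_apply, ContinuousLinearMap.smulRight_apply,
          innerSL_apply_apply, radialProj, real_inner_smul_right]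
        rw [real_inner_comm x w, hζge _ hxa.le, hγ, hgf, hcf]
        simp only [hm]
        match_scalars <;> (field_simp; try ring)
    refine ContinuousOn.congr ?_ hEq
    have hdcont : Continuous (dnP a b R) := by unfold dnP; fun_prop
    have hncont : Continuous (nmP a b R) := by unfold nmP; fun_prop
    have hmaxc : Continuous fun x : E3 => max ‖x‖ a := by fun_prop
    have hne : ∀ x ∈ Metric.closedBall (0 : E3) b, dnP a b R (max ‖x‖ a) ≠ 0 := by
      intro x hx
      rw [Metric.mem_closedBall, dist_zero_right] at hx
      exact (dnP_pos hab hbR (max_le hx hab.le)).ne'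
    have hgc : ContinuousOn (fun x : E3 => gf ‖x‖) (Metric.closedBall (0 : E3) b) := by
      rw [hgf]
      exact ContinuousOn.div continuousOn_const
        ((hdcont.comp hmaxc).pow 2).continuousOn
        (fun x hx => pow_ne_zero 2 (hne x hx))
    have hcc : ContinuousOn (fun x : E3 => cf ‖x‖) (Metric.closedBall (0 : E3) b) := by
      rw [hcf]
      have h1 : Continuous fun x : E3 => nmP a b R (max ‖x‖ a) := hncont.comp hmaxc
      have h2 : Continuous fun x : E3 => dnP a b R (max ‖x‖ a) := hdcont.comp hmaxc
      refine ContinuousOn.div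
        (((h1.pow 2).mul (h2.pow 2)).sub ((hmaxc.pow 2).mul continuous_const)).continuousOn
        (((hmaxc.pow 4).mul continuous_const).mul (h2.pow 2)).continuousOn ?_
      intro x hx
      rw [Metric.mem_closedBall, dist_zero_right] at hx
      have h1 : (0:ℝ) < max ‖x‖ a := lt_of_lt_of_le ha (le_max_right _ _)
      have h2 := dnP_pos hab hbR (max_le hx hab.le)
      positivity
    have hsm : Continuous fun x : E3 => (innerSL ℝ x).smulRight x := by
      exact (((ContinuousLinearMap.smulRightL ℝ E3 E3).continuous.comp
        (innerSL ℝ).continuous)).clm_apply continuous_id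
    exact (hgc.smul continuousOn_const).add (hcc.smul hsm.continuousOn)

/-- d = 3: For the compressed coordinate transformation `ζ`, with
`β(0) = 1`, `β(r) = ζ(r)²ζ'(r)/r²` for `0 < r ≤ b`, and `M(x) = I` for `|x| ≤ a`,
`M(x)w = (ζ(r)²/(r²ζ'(r))) P_x(w) + ζ'(r)(w − P_x(w))` for `a < |x| ≤ b` (`r = |x|`),
the function `β` is continuous and strictly positive on `[0, b]`, each `M(x)` is a symmetric
positive definite linear map, and `x ↦ M(x)` is continuous on the closed ball of radius `b`. -/
theorem stmt12 (a b R : ℝ) (ha : 0 < a) (hab : a < b) (hbR : b < R)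
    (η ζ : ℝ → ℝ)
    (hη : ∀ r : ℝ, η r =
      (a ^ 2 * (R - b) + r * (a ^ 2 + (b - 2 * a) * R)) / ((b - r) * (R - b) + (b - a) ^ 2))
    (hζ : ∀ r : ℝ, ζ r = if r < a then r else η r)
    (β : ℝ → ℝ) (hβ0 : β 0 = 1)
    (hβ : ∀ r : ℝ, 0 < r → r ≤ b → β r = ζ r ^ 2 * deriv ζ r / r ^ 2)
    (M : EuclideanSpace ℝ (Fin 3) → (EuclideanSpace ℝ (Fin 3) →L[ℝ] EuclideanSpace ℝ (Fin 3)))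
    (hM1 : ∀ x : EuclideanSpace ℝ (Fin 3), ‖x‖ ≤ a →
      M x = ContinuousLinearMap.id ℝ (EuclideanSpace ℝ (Fin 3)))
    (hM2 : ∀ x : EuclideanSpace ℝ (Fin 3), a < ‖x‖ → ‖x‖ ≤ b → ∀ w,
      M x w = (ζ ‖x‖ ^ 2 / (‖x‖ ^ 2 * deriv ζ ‖x‖)) • radialProj x w +
        deriv ζ ‖x‖ • (w - radialProj x w)) :
    ContinuousOn β (Set.Icc 0 b) ∧
    (∀ r ∈ Set.Icc (0 : ℝ) b, 0 < β r) ∧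
    (∀ x : EuclideanSpace ℝ (Fin 3), ‖x‖ ≤ b →
      (∀ w z : EuclideanSpace ℝ (Fin 3), ⟪M x w, z⟫ = ⟪w, M x z⟫) ∧
      (∀ w : EuclideanSpace ℝ (Fin 3), w ≠ 0 → 0 < ⟪M x w, w⟫)) ∧
    ContinuousOn M (Metric.closedBall (0 : EuclideanSpace ℝ (Fin 3)) b) := by
  obtain ⟨hζle, hζge, hdlt, hdgt, hda⟩ := zeta_facts a b R ha hab hbR η ζ hη hζ
  obtain ⟨hbc, hbp⟩ := beta_part a b R ha hab hbR ζ hζle hζge hdlt hdgt hda β hβ0 hβ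
  obtain ⟨hpt, hMc⟩ := mat_part a b R ha hab hbR ζ hζge hdgt M hM1 hM2
  exact ⟨hbc, hbp, hpt, hMc⟩

end
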